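/- The sequence a_n = Σ_{k=0}^n C(n,k)^2 C(n+k,k)^2 satisfies the Apery recurrence n^3 u_n - (34n^3 - 51n^2 + 27n - 5) u_{n-1} + (n-1)^3 u_{n-2} = 0 for all n ≥ 2. -/

import Mathlib

-- l2: (j+1) * C(M+1, j+1) = (M+1) * C(M, j)  in ℚ
lemma l2 (M j : ℕ) : ((j:ℚ)+1) * ((M+1).choose (j+1)) = ((M:ℚ)+1) * (M.choose j) := by
  have h := Nat.add_one_mul_choose_eq M j
  have h' : ((Nat.succ M * M.choose j : ℕ) : ℚ) = (((M+1).choose (j+1) * (j+1) : ℕ) : ℚ) := by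
    exact_mod_cast congrArg (fun x : ℕ => (x:ℚ)) h
  push_cast at h'
  linarith

-- l1: (M+1-j) * C(M+1, j) = (M+1) * C(M, j) in ℚ, unconditional
lemma l1 (M j : ℕ) : ((M:ℚ)+1 - j) * ((M+1).choose j) = ((M:ℚ)+1) * (M.choose j) := by
  cases j with
  | zero => simp
  | succ i =>
    have hsucc : ((M+1).choose (i+1) : ℚ) = (M.choose i : ℚ) + (M.choose (i+1) : ℚ) := by
      exact_mod_cast congrArg (fun x : ℕ => (x:ℚ)) (Nat.choose_succ_succ M i)
    rcases le_or_gt M i with h | h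
    · -- M ≤ i : C(M,i+1) = 0
      have h0 : M.choose (i+1) = 0 := Nat.choose_eq_zero_of_lt (by omega)
      rcases eq_or_lt_of_le h with rfl | h'
      · push_cast [h0] at hsucc ⊢; push_cast [hsucc]; ring
      · have h1 : M.choose i = 0 := Nat.choose_eq_zero_of_lt h'
        have h2 : (M+1).choose (i+1) = 0 := Nat.choose_eq_zero_of_lt (by omega)
        simp [h0, h1, h2]
    · -- i < M : use choose_succ_right_eq
      have hr := Nat.choose_succ_right_eq M i
      have hr' : ((M.choose (i+1) * (i+1) : ℕ) : ℚ) = ((M.choose i * (M - i) : ℕ) : ℚ) := by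
        exact_mod_cast congrArg (fun x : ℕ => (x:ℚ)) hr
      have hcast : ((M - i : ℕ) : ℚ) = (M:ℚ) - i := by
        have : i ≤ M := le_of_lt h
        push_cast [this]; ring
      push_cast [hcast] at hr'
      push_cast [hsucc]
      push_cast at hr'
      nlinarith [hr']

noncomputable def certG (m k : ℕ) : ℚ :=
  4*(2*(m:ℚ)+3) * ((k:ℚ)*(2*(k:ℚ)+1) - (2*(m:ℚ)+3)^2)
    * (((m+1).choose k : ℚ))^2 * (((m+1+k).choose k : ℚ))^2

noncomputable def fG (m : ℕ) : ℕ → ℚ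
  | 0 => 0
  | (k+1) => certG m k

set_option maxHeartbeats 4000000 in
lemma step (m k : ℕ) :
    ((m:ℚ)+2)^3 * ((((m+2).choose k : ℚ))^2 * (((m+2+k).choose k : ℚ))^2)
      - (34*((m:ℚ)+2)^3 - 51*((m:ℚ)+2)^2 + 27*((m:ℚ)+2) - 5)
          * ((((m+1).choose k : ℚ))^2 * (((m+1+k).choose k : ℚ))^2)
      + ((m:ℚ)+1)^3 * (((m.choose k : ℚ))^2 * (((m+k).choose k : ℚ))^2)
    = fG m (k+1) - fG m k := by
  cases k with
  | zero =>
      simp [fG, certG]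
      ring
  | succ j =>
      simp only [fG, certG]
      -- base values
      set a : ℚ := ((m+2).choose (j+1) : ℚ) with ha
      set b : ℚ := ((m+2+(j+1)).choose (j+1) : ℚ) with hb
      -- derived values
      have hm2 : ((m:ℚ)+2) ≠ 0 := by positivity
      have hm1 : ((m:ℚ)+1) ≠ 0 := by positivity
      have hmk2 : ((m:ℚ)+2+(j+1)) ≠ 0 := by positivity
      have hmk1 : ((m:ℚ)+1+(j+1)) ≠ 0 := by positivity
      -- e1 : C(m+1,j+1)
      have e1 : (((m+1).choose (j+1) : ℚ)) = ((m:ℚ)+2-(j+1)) * a / ((m:ℚ)+2) := by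
        have h := l1 (m+1) (j+1)
        push_cast at h ⊢
        rw [eq_div_iff hm2]
        linarith [h]
      -- e2 : C(m,j+1)
      have e2 : ((m.choose (j+1) : ℚ)) = ((m:ℚ)+1-(j+1)) * (((m+1).choose (j+1) : ℚ)) / ((m:ℚ)+1) := by
        have h := l1 m (j+1)
        push_cast at h ⊢
        rw [eq_div_iff hm1]
        linarith [h]
      -- e3 : C(m+1+(j+1), j+1)
      have e3 : (((m+1+(j+1)).choose (j+1) : ℚ)) = ((m:ℚ)+2) * b / ((m:ℚ)+2+(j+1)) := by
        have h := l1 (m+1+(j+1)) (j+1)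
        have harg : m+1+(j+1)+1 = m+2+(j+1) := by omega
        rw [harg] at h
        push_cast at h ⊢
        rw [eq_div_iff hmk2]
        linarith [h]
      -- e4 : C(m+(j+1), j+1)
      have e4 : (((m+(j+1)).choose (j+1) : ℚ)) = ((m:ℚ)+1) * (((m+1+(j+1)).choose (j+1) : ℚ)) / ((m:ℚ)+1+(j+1)) := by
        have h := l1 (m+(j+1)) (j+1)
        have harg : m+(j+1)+1 = m+1+(j+1) := by omega
        rw [harg] at h
        push_cast at h ⊢
        rw [eq_div_iff hmk1]
        linarith [h]
      -- e5 : C(m+1, j)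
      have e5 : (((m+1).choose j : ℚ)) = ((j:ℚ)+1) * a / ((m:ℚ)+2) := by
        have h := l2 (m+1) j
        push_cast at h ⊢
        rw [eq_div_iff hm2]
        linarith [h]
      -- e6 : C(m+1+j, j)
      have e6 : (((m+1+j).choose j : ℚ))
          = ((m:ℚ)+2) * ((j:ℚ)+1) * b / ((((m:ℚ)+2+(j+1)) * ((m:ℚ)+1+(j+1)))) := by
        have h1 := l2 (m+2+j) j   -- (j+1) * C(m+3+j, j+1) = (m+3+j) * C(m+2+j, j)
        have h2 := l1 (m+1+j) j   -- (m+2+j - j) * C(m+2+j, j) = (m+2+j) * C(m+1+j, j)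
        have harg1 : m+2+j+1 = m+2+(j+1) := by omega
        have harg2 : m+1+j+1 = m+2+j := by omega
        rw [harg1] at h1
        rw [harg2] at h2
        push_cast at h1 h2 ⊢
        rw [eq_div_iff (by positivity)]
        have hx : (((m+2+j).choose j : ℚ)) = ((j:ℚ)+1) * b / ((m:ℚ)+2+(j+1)) := by
          rw [eq_div_iff hmk2]; push_cast; linarith [h1]
        rw [hx] at h2
        field_simp at h2
        push_cast at h2
        nlinarith [h2]
      rw [e2, e4, e1, e3, e5, e6]
      push_cast
      field_simp
      ring

/-- The Apery sequence `a n = ∑ k, C(n,k)^2 C(n+k,k)^2`. -/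
def aperyA (n : ℕ) : ℚ :=
  ∑ k ∈ Finset.range (n + 1), ((n.choose k : ℚ))^2 * (((n + k).choose k : ℚ))^2

/-- The sequence `a_n = Σ_{k=0}^n C(n,k)^2 C(n+k,k)^2` satisfies Apery's recurrence
`n^3 u_n - (34n^3 - 51n^2 + 27n - 5) u_{n-1} + (n-1)^3 u_{n-2} = 0` for all `n ≥ 2`. -/
theorem apery_a_recurrence :
    ∀ n : ℕ, 2 ≤ n →
      (n : ℚ)^3 * aperyA n
        - (34 * (n : ℚ)^3 - 51 * (n : ℚ)^2 + 27 * (n : ℚ) - 5) * aperyA (n - 1)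
        + ((n : ℚ) - 1)^3 * aperyA (n - 2) = 0 := by
  intro n hn
  obtain ⟨m, rfl⟩ : ∃ m, n = m + 2 := ⟨n - 2, by omega⟩
  have h1 : m + 2 - 1 = m + 1 := by omega
  have h2 : m + 2 - 2 = m := by omega
  rw [h1, h2]
  -- extend the two shorter sums to range (m+3)
  have hA1 : aperyA (m+1)
      = ∑ k ∈ Finset.range (m+3), (((m+1).choose k : ℚ))^2 * (((m+1+k).choose k : ℚ))^2 := by
    rw [aperyA, Finset.sum_range_succ (n := m+2)]
    have : (m+1).choose (m+2) = 0 := Nat.choose_eq_zero_of_lt (by omega)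
    simp [this]
  have hA2 : aperyA m
      = ∑ k ∈ Finset.range (m+3), ((m.choose k : ℚ))^2 * (((m+k).choose k : ℚ))^2 := by
    rw [aperyA, Finset.sum_range_succ (n := m+2), Finset.sum_range_succ (n := m+1)]
    have e1 : m.choose (m+2) = 0 := Nat.choose_eq_zero_of_lt (by omega)
    have e2 : m.choose (m+1) = 0 := Nat.choose_eq_zero_of_lt (by omega)
    simp [e1, e2]
  rw [hA1, hA2, aperyA]
  push_cast
  rw [Finset.mul_sum, Finset.mul_sum, Finset.mul_sum, ← Finset.sum_sub_distrib,
    ← Finset.sum_add_distrib]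
  simp only [show (m:ℚ)+2-1 = (m:ℚ)+1 from by ring, show m+2+1 = m+3 from by omega]
  have hsum : ∀ k ∈ Finset.range (m+3),
      ((m:ℚ)+2)^3 * ((((m+2).choose k : ℚ))^2 * (((m+2+k).choose k : ℚ))^2)
        - (34*((m:ℚ)+2)^3 - 51*((m:ℚ)+2)^2 + 27*((m:ℚ)+2) - 5)
            * ((((m+1).choose k : ℚ))^2 * (((m+1+k).choose k : ℚ))^2)
        + ((m:ℚ)+1)^3 * (((m.choose k : ℚ))^2 * (((m+k).choose k : ℚ))^2)
      = fG m (k+1) - fG m k := fun k _ => step m k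
  calc (∑ k ∈ Finset.range (m+3),
        (((m:ℚ)+2)^3 * ((((m+2).choose k : ℚ))^2 * (((m+2+k).choose k : ℚ))^2)
          - (34*((m:ℚ)+2)^3 - 51*((m:ℚ)+2)^2 + 27*((m:ℚ)+2) - 5)
              * ((((m+1).choose k : ℚ))^2 * (((m+1+k).choose k : ℚ))^2)
          + ((m:ℚ)+1)^3 * (((m.choose k : ℚ))^2 * (((m+k).choose k : ℚ))^2)))
      = ∑ k ∈ Finset.range (m+3), (fG m (k+1) - fG m k) := Finset.sum_congr rfl hsum
    _ = fG m (m+3) - fG m 0 := Finset.sum_range_sub (fG m) (m+3)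
    _ = 0 := by
        have : (m+1).choose (m+2) = 0 := Nat.choose_eq_zero_of_lt (by omega)
        simp [fG, certG, this]
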